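/- Let P₁ and P₂ be k×k row-stochastic matrices and define the k×k matrix R by R(i,j) = √(P₁(i,j)·P₂(i,j)). Then every complex eigenvalue of R has modulus at most 1. -/

import Mathlib

open Matrix BigOperators

/-- every complex eigenvalue of `R(i,j) = √(P₁(i,j)·P₂(i,j))` has modulus
at most `1`. -/
theorem stmt_3 (k : ℕ) (P1 P2 : Matrix (Fin k) (Fin k) ℝ)
    (hP1 : ∀ i j, 0 ≤ P1 i j) (hP1r : ∀ i, ∑ j, P1 i j = 1)
    (hP2 : ∀ i j, 0 ≤ P2 i j) (hP2r : ∀ i, ∑ j, P2 i j = 1)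
    (R : Matrix (Fin k) (Fin k) ℝ) (hR : ∀ i j, R i j = Real.sqrt (P1 i j * P2 i j))
    (μ : ℂ) (hμ : μ ∈ spectrum ℂ (R.map ((↑) : ℝ → ℂ))) :
    ‖μ‖ ≤ 1 := by
  set A : Matrix (Fin k) (Fin k) ℂ := R.map ((↑) : ℝ → ℂ)
  have heig : Module.End.HasEigenvalue (Matrix.toLin' A) μ := by
    rw [Module.End.hasEigenvalue_iff_mem_spectrum]
    have he : spectrum ℂ (Matrix.toLinAlgEquiv' A) = spectrum ℂ A :=
      AlgEquiv.spectrum_eq Matrix.toLinAlgEquiv' A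
    have : Matrix.toLin' A = Matrix.toLinAlgEquiv' A := rfl
    rw [this, he]; exact hμ
  obtain ⟨i, hi⟩ := eigenvalue_mem_ball heig
  rw [Metric.mem_closedBall] at hi
  have habs : ∀ i j, ‖A i j‖ = R i j := by
    intro i j
    simp only [A, Matrix.map_apply, Complex.norm_real, Real.norm_eq_abs]
    rw [abs_of_nonneg (by rw [hR]; exact Real.sqrt_nonneg _)]
  have hrow : ∑ j, ‖A i j‖ ≤ 1 := by
    simp_rw [habs, hR]
    simp_rw [Real.sqrt_mul (hP1 i _)]
    calc ∑ j, Real.sqrt (P1 i j) * Real.sqrt (P2 i j)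
        ≤ Real.sqrt (∑ j, P1 i j) * Real.sqrt (∑ j, P2 i j) :=
          Real.sum_sqrt_mul_sqrt_le _ (hP1 i) (hP2 i)
      _ = 1 := by rw [hP1r, hP2r]; simp
  calc ‖μ‖ = ‖μ‖ := rfl
    _ ≤ ‖μ - A i i‖ + ‖A i i‖ := by
        simpa using norm_add_le (μ - A i i) (A i i)
    _ = dist μ (A i i) + ‖A i i‖ := by rw [dist_eq_norm]
    _ ≤ (∑ j ∈ Finset.univ.erase i, ‖A i j‖) + ‖A i i‖ := by linarith
    _ = ∑ j, ‖A i j‖ := by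
        rw [Finset.sum_erase_eq_sub (Finset.mem_univ i)]; ring
    _ ≤ 1 := hrow
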